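/- arXiv:1910.06960 — 4 statements merged into one kernel-verified Lean document; each statement's English description precedes it below -/
import Mathlib

section
/- Large angular separation forces different quantization: let z, w ∈ ℂ be off-axis (z.re ≠ 0, z.im ≠ 0, w.re ≠ 0, w.im ≠ 0). If the circular distance modulo 2π between arg z and arg w is strictly greater than π/2, then q(z) ≠ q(w). -/
/-- 1-bit quantization of a complex number: signs of the real and imaginary parts. -/
noncomputable def q (z : ℂ) : ℝ × ℝ := (Real.sign z.re, Real.sign z.im)

/-- Circular distance modulo `2π`. -/
noncomputable def circDist (a b : ℝ) : ℝ := ⨅ j : ℤ, |a - b - 2 * Real.pi * j|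

lemma circDist_le_abs (a b : ℝ) : circDist a b ≤ |a - b| := by
  have := ciInf_le (f := fun j : ℤ => |a - b - 2 * Real.pi * j|)
    ⟨0, fun x ⟨j, hj⟩ => hj ▸ abs_nonneg _⟩ 0
  simpa [circDist] using this

open Complex in
lemma arg_bound (u : ℂ) (hre : u.re ≠ 0) (him : u.im ≠ 0) :
    (0 < u.re → 0 < u.im → u.arg ∈ Set.Icc 0 (Real.pi / 2)) ∧
    (0 < u.re → u.im < 0 → u.arg ∈ Set.Icc (-(Real.pi / 2)) 0) ∧
    (u.re < 0 → 0 < u.im → u.arg ∈ Set.Icc (Real.pi / 2) Real.pi) ∧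
    (u.re < 0 → u.im < 0 → u.arg ∈ Set.Icc (-Real.pi) (-(Real.pi / 2))) := by
  have hu0 : u ≠ 0 := fun h => him (by simp [h])
  have habs : 0 < u.re → |u.arg| ≤ Real.pi / 2 :=
    fun h => (abs_arg_lt_pi_div_two_iff.2 (Or.inl h)).le
  have habs' : u.re < 0 → Real.pi / 2 ≤ |u.arg| := by
    intro h
    by_contra hc
    rcases abs_arg_lt_pi_div_two_iff.1 (not_le.mp hc) with h1 | h1
    · linarith
    · exact hu0 h1
  refine ⟨fun h1 h2 => ⟨arg_nonneg_iff.2 h2.le, ?_⟩,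
    fun h1 h2 => ⟨?_, (arg_neg_iff.2 h2).le⟩,
    fun h1 h2 => ⟨?_, arg_le_pi u⟩,
    fun h1 h2 => ⟨(neg_pi_lt_arg u).le, ?_⟩⟩
  · have := habs h1; rw [abs_le] at this; exact this.2
  · have := habs h1; rw [abs_le] at this; exact this.1
  · have ha := arg_nonneg_iff.2 h2.le
    have := habs' h1; rwa [_root_.abs_of_nonneg ha] at this
  · have ha := (arg_neg_iff.2 h2).le
    have := habs' h1; rw [_root_.abs_of_nonpos ha] at this; linarith

/-- Large angular separation forces different quantization: if `z, w` are off-axis and the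
circular distance mod `2π` between `arg z` and `arg w` exceeds `π/2`, then `q z ≠ q w`. -/
theorem quantization_ne_of_large_angle (z w : ℂ)
    (hzre : z.re ≠ 0) (hzim : z.im ≠ 0) (hwre : w.re ≠ 0) (hwim : w.im ≠ 0)
    (h : circDist (Complex.arg z) (Complex.arg w) > Real.pi / 2) :
    q z ≠ q w := by
  intro hq
  have hre : Real.sign z.re = Real.sign w.re := congrArg Prod.fst hq
  have him : Real.sign z.im = Real.sign w.im := congrArg Prod.snd hq
  have key : |Complex.arg z - Complex.arg w| ≤ Real.pi / 2 := by
    obtain ⟨A1, A2, A3, A4⟩ := arg_bound z hzre hzim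
    obtain ⟨B1, B2, B3, B4⟩ := arg_bound w hwre hwim
    rcases hzre.lt_or_gt with h1 | h1 <;> rcases hzim.lt_or_gt with h2 | h2
    · have w1 : w.re < 0 := by
        rcases hwre.lt_or_gt with h' | h'; · exact h'
        rw [Real.sign_of_neg h1, Real.sign_of_pos h'] at hre; norm_num at hre
      have w2 : w.im < 0 := by
        rcases hwim.lt_or_gt with h' | h'; · exact h'
        rw [Real.sign_of_neg h2, Real.sign_of_pos h'] at him; norm_num at him
      obtain ⟨a1, a2⟩ := A4 h1 h2; obtain ⟨b1, b2⟩ := B4 w1 w2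
      rw [abs_le]; constructor <;> linarith
    · have w1 : w.re < 0 := by
        rcases hwre.lt_or_gt with h' | h'; · exact h'
        rw [Real.sign_of_neg h1, Real.sign_of_pos h'] at hre; norm_num at hre
      have w2 : 0 < w.im := by
        rcases hwim.lt_or_gt with h' | h'
        · rw [Real.sign_of_pos h2, Real.sign_of_neg h'] at him; norm_num at him
        · exact h'
      obtain ⟨a1, a2⟩ := A3 h1 h2; obtain ⟨b1, b2⟩ := B3 w1 w2
      rw [abs_le]; constructor <;> linarith
    · have w1 : 0 < w.re := by
        rcases hwre.lt_or_gt with h' | h'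
        · rw [Real.sign_of_pos h1, Real.sign_of_neg h'] at hre; norm_num at hre
        · exact h'
      have w2 : w.im < 0 := by
        rcases hwim.lt_or_gt with h' | h'; · exact h'
        rw [Real.sign_of_neg h2, Real.sign_of_pos h'] at him; norm_num at him
      obtain ⟨a1, a2⟩ := A2 h1 h2; obtain ⟨b1, b2⟩ := B2 w1 w2
      rw [abs_le]; constructor <;> linarith
    · have w1 : 0 < w.re := by
        rcases hwre.lt_or_gt with h' | h'
        · rw [Real.sign_of_pos h1, Real.sign_of_neg h'] at hre; norm_num at hre
        · exact h'
      have w2 : 0 < w.im := by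
        rcases hwim.lt_or_gt with h' | h'
        · rw [Real.sign_of_pos h2, Real.sign_of_neg h'] at him; norm_num at him
        · exact h'
      obtain ⟨a1, a2⟩ := A1 h1 h2; obtain ⟨b1, b2⟩ := B1 w1 w2
      rw [abs_le]; constructor <;> linarith
  exact absurd (le_trans (circDist_le_abs _ _) key) (not_le.2 h)
end

section
/- Key rotation lemma: let z, w ∈ ℂ be nonzero and let β be the circular distance modulo 2π between arg z and arg w. Assume 0 < β ≤ π/2, let N be a natural number with N ≥ π/(2β), and set θ_k = k·π/(2N) for k = 1, …, N. Assume that for every k ∈ {1, …, N} both exp(I·θ_k)·z and exp(I·θ_k)·w are off-axis. Then there exists k ∈ {1, …, N} such that q(exp(I·θ_k)·z) ≠ q(exp(I·θ_k)·w), i.e., some rotation from the grid places z and w in different quadrants. -/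
/-- A complex number is off-axis if both its real and imaginary parts are nonzero. -/
def offAxis (z : ℂ) : Prop := z.re ≠ 0 ∧ z.im ≠ 0

lemma rot_re (v : ℂ) (θ : ℝ) :
    (Complex.exp (Complex.I * (θ:ℂ)) * v).re = ‖v‖ * Real.cos (θ + Complex.arg v) := by
  rw [mul_comm Complex.I, Complex.mul_re, Complex.exp_ofReal_mul_I_re, Complex.exp_ofReal_mul_I_im,
    ← Complex.norm_mul_cos_arg v, ← Complex.norm_mul_sin_arg v, Real.cos_add]
  ring

lemma rot_im (v : ℂ) (θ : ℝ) :
    (Complex.exp (Complex.I * (θ:ℂ)) * v).im = ‖v‖ * Real.sin (θ + Complex.arg v) := by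
  rw [mul_comm Complex.I, Complex.mul_im, Complex.exp_ofReal_mul_I_re, Complex.exp_ofReal_mul_I_im,
    ← Complex.norm_mul_cos_arg v, ← Complex.norm_mul_sin_arg v, Real.sin_add]
  ring

lemma sign_mul_pos' {c x : ℝ} (hc : 0 < c) : Real.sign (c * x) = Real.sign x := by
  rcases lt_trichotomy x 0 with h | h | h
  · rw [Real.sign_of_neg h, Real.sign_of_neg (mul_neg_of_pos_of_neg hc h)]
  · simp [h]
  · rw [Real.sign_of_pos h, Real.sign_of_pos (mul_pos hc h)]

lemma sign_ne_of_mul_neg {x y : ℝ} (h : x * y < 0) : Real.sign x ≠ Real.sign y := by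
  rcases mul_neg_iff.mp h with ⟨hx, hy⟩ | ⟨hx, hy⟩
  · rw [Real.sign_of_pos hx, Real.sign_of_neg hy]; norm_num
  · rw [Real.sign_of_neg hx, Real.sign_of_pos hy]; norm_num

lemma circDist_attained (x : ℝ) :
    ∃ j : ℤ, (⨅ j : ℤ, |x - 2 * Real.pi * j|) = |x - 2 * Real.pi * j| := by
  have hπ := Real.pi_pos
  set j₀ : ℤ := round (x / (2 * Real.pi)) with hj₀
  refine ⟨j₀, le_antisymm (ciInf_le ⟨0, fun y ⟨i, hi⟩ => hi ▸ abs_nonneg _⟩ j₀)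
    (le_ciInf fun i => ?_)⟩
  have hb : |x - 2 * Real.pi * j₀| ≤ Real.pi := by
    have h1 := abs_sub_round (x / (2 * Real.pi))
    have h2 : x - 2 * Real.pi * j₀ = (x / (2 * Real.pi) - j₀) * (2 * Real.pi) := by
      field_simp
    rw [h2, abs_mul, abs_of_pos (show (0:ℝ) < 2 * Real.pi by linarith)]
    nlinarith [h1]
  rcases eq_or_ne i j₀ with rfl | hij
  · exact le_refl _
  have hgap : 2 * Real.pi ≤ |2 * Real.pi * (i:ℝ) - 2 * Real.pi * (j₀:ℝ)| := by
    have : (1:ℝ) ≤ |(i:ℝ) - (j₀:ℝ)| := by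
      rw [← Int.cast_sub, ← Int.cast_abs]
      exact_mod_cast Int.one_le_abs (sub_ne_zero.mpr hij)
    calc 2 * Real.pi = 2 * Real.pi * 1 := by ring
      _ ≤ 2 * Real.pi * |(i:ℝ) - (j₀:ℝ)| := by nlinarith
      _ = |2 * Real.pi * ((i:ℝ) - (j₀:ℝ))| := by
          rw [abs_mul, abs_of_pos (show (0:ℝ) < 2 * Real.pi by linarith)]
      _ = |2 * Real.pi * (i:ℝ) - 2 * Real.pi * (j₀:ℝ)| := by ring_nf
  have htri : |2 * Real.pi * (i:ℝ) - 2 * Real.pi * (j₀:ℝ)| ≤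
      |x - 2 * Real.pi * j₀| + |x - 2 * Real.pi * i| := by
    rw [show 2 * Real.pi * (i:ℝ) - 2 * Real.pi * (j₀:ℝ)
        = (x - 2 * Real.pi * (j₀:ℝ)) - (x - 2 * Real.pi * (i:ℝ)) from by ring]
    exact abs_sub _ _
  linarith

lemma cos_or_sin_flip {s t : ℝ} (m : ℤ) (h1 : m * (Real.pi/2) - Real.pi/2 < s)
    (h2 : s < m * (Real.pi/2)) (h3 : m * (Real.pi/2) < t) (h4 : t < m * (Real.pi/2) + Real.pi/2) :
    Real.cos s * Real.cos t < 0 ∨ Real.sin s * Real.sin t < 0 := by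
  have hπ := Real.pi_pos
  rcases Int.even_or_odd m with ⟨p, hp⟩ | ⟨p, hp⟩
  · right
    have hm : (m:ℝ) * (Real.pi/2) = p * Real.pi := by
      rw [hp]; push_cast; ring
    rw [hm] at h1 h2 h3 h4
    have hs : Real.sin s = (-1)^p * Real.sin (s - p * Real.pi) := by
      rw [show s = (s - p * Real.pi) + p * Real.pi from by ring] at h2 ⊢
      rw [Real.sin_add_int_mul_pi]
      ring
    have ht : Real.sin t = (-1)^p * Real.sin (t - p * Real.pi) := by
      rw [show t = (t - p * Real.pi) + p * Real.pi from by ring] at h3 ⊢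
      rw [Real.sin_add_int_mul_pi]
      ring
    have hsn : Real.sin (s - p * Real.pi) < 0 :=
      Real.sin_neg_of_neg_of_neg_pi_lt (by linarith) (by linarith)
    have htp : 0 < Real.sin (t - p * Real.pi) :=
      Real.sin_pos_of_pos_of_lt_pi (by linarith) (by linarith)
    have hsq : ((-1:ℝ)^p) * ((-1:ℝ)^p) = 1 := by
      rw [← zpow_add₀ (by norm_num : (-1:ℝ) ≠ 0)]
      exact Even.neg_one_zpow ⟨p, by ring⟩
    rw [hs, ht, show (-1:ℝ)^p * Real.sin (s - p * Real.pi) * ((-1)^p * Real.sin (t - p * Real.pi))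
        = ((-1:ℝ)^p * (-1)^p) * (Real.sin (s - p * Real.pi) * Real.sin (t - p * Real.pi)) from by
          ring,
      hsq, one_mul]
    exact mul_neg_of_neg_of_pos hsn htp
  · left
    have hm : (m:ℝ) * (Real.pi/2) = p * Real.pi + Real.pi/2 := by
      rw [hp]; push_cast; ring
    rw [hm] at h1 h2 h3 h4
    have hs : Real.cos s = (-1)^p * Real.cos (s - p * Real.pi) := by
      rw [show s = (s - p * Real.pi) + p * Real.pi from by ring] at h2 ⊢
      rw [Real.cos_add_int_mul_pi]
      ring
    have ht : Real.cos t = (-1)^p * Real.cos (t - p * Real.pi) := by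
      rw [show t = (t - p * Real.pi) + p * Real.pi from by ring] at h3 ⊢
      rw [Real.cos_add_int_mul_pi]
      ring
    have hsp : 0 < Real.cos (s - p * Real.pi) :=
      Real.cos_pos_of_mem_Ioo ⟨by linarith, by linarith⟩
    have htn : Real.cos (t - p * Real.pi) < 0 :=
      Real.cos_neg_of_pi_div_two_lt_of_lt (by linarith) (by linarith)
    have hsq : ((-1:ℝ)^p) * ((-1:ℝ)^p) = 1 := by
      rw [← zpow_add₀ (by norm_num : (-1:ℝ) ≠ 0)]
      exact Even.neg_one_zpow ⟨p, by ring⟩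
    rw [hs, ht, show (-1:ℝ)^p * Real.cos (s - p * Real.pi) * ((-1)^p * Real.cos (t - p * Real.pi))
        = ((-1:ℝ)^p * (-1)^p) * (Real.cos (s - p * Real.pi) * Real.cos (t - p * Real.pi)) from by
          ring,
      hsq, one_mul]
    exact mul_neg_of_pos_of_neg hsp htn

lemma rotation_key (z w : ℂ) (hz : z ≠ 0) (hw : w ≠ 0) (β : ℝ)
    (hβ0 : 0 < β) (hβπ : β ≤ Real.pi / 2)
    (N : ℕ) (hN1 : 1 ≤ N) (hhβ : Real.pi / (2 * N) ≤ β) (j : ℤ)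
    (hrel : Complex.arg w = Complex.arg z + β + 2 * Real.pi * j)
    (hoff : ∀ k ∈ Finset.Icc 1 N,
      offAxis (Complex.exp (Complex.I * (((k : ℝ) * Real.pi / (2 * N) : ℝ) : ℂ)) * z) ∧
      offAxis (Complex.exp (Complex.I * (((k : ℝ) * Real.pi / (2 * N) : ℝ) : ℂ)) * w)) :
    ∃ k ∈ Finset.Icc 1 N,
      q (Complex.exp (Complex.I * (((k : ℝ) * Real.pi / (2 * N) : ℝ) : ℂ)) * z) ≠
      q (Complex.exp (Complex.I * (((k : ℝ) * Real.pi / (2 * N) : ℝ) : ℂ)) * w) := by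
  have hπ := Real.pi_pos
  have hN0 : (0:ℝ) < N := by exact_mod_cast hN1
  set h : ℝ := Real.pi / (2 * N) with hdefh
  have hh : 0 < h := by positivity
  have hNh : (N:ℝ) * h = Real.pi / 2 := by
    rw [hdefh]; field_simp
  set ψ : ℝ := Complex.arg z with hψ
  set m : ℤ := ⌊(ψ + h) / (Real.pi / 2)⌋ + 1 with hm
  set c : ℝ := m * (Real.pi / 2) - ψ with hc
  have hc1 : h < c := by
    have hlt := Int.lt_floor_add_one ((ψ + h) / (Real.pi / 2))
    have h2 : ψ + h < m * (Real.pi / 2) := by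
      have h3 := (div_lt_iff₀ (by linarith : (0:ℝ) < Real.pi / 2)).mp hlt
      rw [hm]
      push_cast
      linarith [h3]
    rw [hc]; linarith
  have hc2 : c ≤ h + Real.pi / 2 := by
    have := Int.floor_le ((ψ + h) / (Real.pi / 2))
    have h2 : ((m:ℝ) - 1) * (Real.pi / 2) ≤ ψ + h := by
      rw [hm]
      push_cast
      rw [show ((⌊(ψ + h) / (Real.pi / 2)⌋:ℝ) + 1 - 1) = (⌊(ψ + h) / (Real.pi / 2)⌋:ℝ) from by ring]
      rw [← le_div_iff₀ (by linarith : (0:ℝ) < Real.pi / 2)]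
      exact this
    rw [hc]; nlinarith
  set K : ℕ := ⌈c / h⌉₊ with hK
  have hK2 : 2 ≤ K := by
    have : (1:ℝ) < c / h := (one_lt_div hh).mpr hc1
    have := Nat.lt_ceil.mpr (by exact_mod_cast this : ((1:ℕ):ℝ) < c / h)
    omega
  set k : ℕ := K - 1 with hk
  have hk1 : 1 ≤ k := by omega
  have hklt : (k:ℝ) * h < c := by
    have : (k:ℝ) < c / h := Nat.lt_ceil.mp (by omega)
    rw [← lt_div_iff₀ hh]
    exact this
  have hkub : c ≤ ((k:ℝ) + 1) * h := by
    have h1 : (K:ℝ) ≥ c / h := Nat.le_ceil _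
    have h2 : ((k:ℝ) + 1) = (K:ℝ) := by
      rw [hk]; push_cast [Nat.cast_sub (by omega : 1 ≤ K)]; ring
    rw [h2, ge_iff_le, div_le_iff₀ hh] at *
    linarith [h1]
  have hkN : k ≤ N := by
    have : c / h ≤ ((N:ℝ) + 1) := by
      rw [div_le_iff₀ hh]
      have hexp : ((N:ℝ) + 1) * h = (N:ℝ) * h + h := by ring
      rw [hexp, hNh]
      linarith
    have hceil : K ≤ N + 1 := by
      rw [hK]
      exact Nat.ceil_le.mpr (by exact_mod_cast this)
    omega
  have hkmem : k ∈ Finset.Icc 1 N := Finset.mem_Icc.mpr ⟨hk1, hkN⟩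
  set θ : ℝ := (k:ℝ) * h with hθ
  have hθeq : (k : ℝ) * Real.pi / (2 * N) = θ := by
    rw [hθ, hdefh]; ring
  set s : ℝ := θ + ψ with hsdef
  set t : ℝ := s + β with htdef
  have hs2 : s < m * (Real.pi / 2) := by rw [hsdef, hθ]; rw [hc] at hklt; linarith
  have hsge : m * (Real.pi / 2) - β ≤ s := by
    rw [hsdef, hθ]; rw [hc] at hkub
    nlinarith [hkub, hhβ]
  obtain ⟨hoz, how⟩ := hoff k hkmem
  have habsw : (0:ℝ) < ‖w‖ := by
    simpa [norm_pos_iff] using hw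
  have habsz : (0:ℝ) < ‖z‖ := by
    simpa [norm_pos_iff] using hz
  have hcost : Real.cos (θ + Complex.arg w) = Real.cos t := by
    rw [hrel, show θ + (ψ + β + 2 * Real.pi * j) = (θ + ψ + β) + j * (2 * Real.pi) from by ring,
      Real.cos_add_int_mul_two_pi, htdef, hsdef]
  have hsint : Real.sin (θ + Complex.arg w) = Real.sin t := by
    rw [hrel, show θ + (ψ + β + 2 * Real.pi * j) = (θ + ψ + β) + j * (2 * Real.pi) from by ring,
      Real.sin_add_int_mul_two_pi, htdef, hsdef]
  have hcos_ne : Real.cos t ≠ 0 := by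
    have := how.1
    rw [hθeq, rot_re] at this
    rw [← hcost]
    exact fun hh0 => this (by rw [hh0, mul_zero])
  have hsin_ne : Real.sin t ≠ 0 := by
    have := how.2
    rw [hθeq, rot_im] at this
    rw [← hsint]
    exact fun hh0 => this (by rw [hh0, mul_zero])
  have ht_ne : t ≠ m * (Real.pi / 2) := by
    intro heq
    have h2t : Real.sin (2 * t) = 0 := by
      rw [heq, show 2 * ((m:ℝ) * (Real.pi / 2)) = (m:ℝ) * Real.pi from by ring]
      exact Real.sin_int_mul_pi m
    rw [Real.sin_two_mul] at h2t
    rcases mul_eq_zero.mp h2t with h' | h'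
    · rcases mul_eq_zero.mp h' with h'' | h''
      · norm_num at h''
      · exact hsin_ne h''
    · exact hcos_ne h'
  have ht3 : m * (Real.pi / 2) < t :=
    lt_of_le_of_ne (by rw [htdef]; linarith) (Ne.symm ht_ne)
  have h1 : m * (Real.pi / 2) - Real.pi / 2 < s := by rw [htdef] at ht3; linarith
  have h4 : t < m * (Real.pi / 2) + Real.pi / 2 := by rw [htdef]; linarith
  have hqz : q (Complex.exp (Complex.I * (((k : ℝ) * Real.pi / (2 * N) : ℝ) : ℂ)) * z) =
      (Real.sign (Real.cos s), Real.sign (Real.sin s)) := by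
    unfold q
    rw [hθeq, rot_re, rot_im, sign_mul_pos' habsz, sign_mul_pos' habsz, ← hψ, ← hsdef]
  have hqw : q (Complex.exp (Complex.I * (((k : ℝ) * Real.pi / (2 * N) : ℝ) : ℂ)) * w) =
      (Real.sign (Real.cos t), Real.sign (Real.sin t)) := by
    unfold q
    rw [hθeq, rot_re, rot_im, sign_mul_pos' habsw, sign_mul_pos' habsw, hcost, hsint]
  refine ⟨k, hkmem, ?_⟩
  rw [hqz, hqw]
  rcases cos_or_sin_flip m h1 hs2 ht3 h4 with hflip | hflip
  · intro hq
    exact sign_ne_of_mul_neg hflip (congrArg Prod.fst hq)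
  · intro hq
    exact sign_ne_of_mul_neg hflip (congrArg Prod.snd hq)

/-- Key rotation lemma: if `z, w ≠ 0` have circular angular distance `β` with `0 < β ≤ π/2`,
and `N ≥ π/(2β)`, then some rotation `exp(I·k·π/(2N))`, `1 ≤ k ≤ N`, places `z` and `w` in
different quadrants (assuming all rotated points are off-axis). -/
theorem rotation_separates (z w : ℂ) (hz : z ≠ 0) (hw : w ≠ 0) (β : ℝ)
    (hβ : β = circDist (Complex.arg z) (Complex.arg w))
    (hβ0 : 0 < β) (hβπ : β ≤ Real.pi / 2)
    (N : ℕ) (hN : Real.pi / (2 * β) ≤ (N : ℝ))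
    (hoff : ∀ k ∈ Finset.Icc 1 N,
      offAxis (Complex.exp (Complex.I * (((k : ℝ) * Real.pi / (2 * N) : ℝ) : ℂ)) * z) ∧
      offAxis (Complex.exp (Complex.I * (((k : ℝ) * Real.pi / (2 * N) : ℝ) : ℂ)) * w)) :
    ∃ k ∈ Finset.Icc 1 N,
      q (Complex.exp (Complex.I * (((k : ℝ) * Real.pi / (2 * N) : ℝ) : ℂ)) * z) ≠
      q (Complex.exp (Complex.I * (((k : ℝ) * Real.pi / (2 * N) : ℝ) : ℂ)) * w) := by
  have hπ := Real.pi_pos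
  have hN1 : 1 ≤ N := by
    have h1 : (1:ℝ) ≤ Real.pi / (2 * β) := by
      rw [le_div_iff₀ (by positivity)]
      linarith
    have : (1:ℝ) ≤ (N:ℝ) := le_trans h1 hN
    exact_mod_cast this
  have hN0 : (0:ℝ) < N := by
    have : (0:ℕ) < N := hN1
    exact_mod_cast this
  have hhβ : Real.pi / (2 * N) ≤ β := by
    have h2 : Real.pi ≤ (N:ℝ) * (2 * β) := by
      rw [div_le_iff₀ (by positivity)] at hN
      linarith
    rw [div_le_iff₀ (by positivity)]
    nlinarith
  obtain ⟨j, hj⟩ := circDist_attained (Complex.arg z - Complex.arg w)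
  have hβj : β = |Complex.arg z - Complex.arg w - 2 * Real.pi * j| := by
    rw [hβ, circDist, hj]
  rcases (abs_eq hβ0.le).mp hβj.symm with h' | h'
  · obtain ⟨k, hk, hne⟩ := rotation_key w z hw hz β hβ0 hβπ N hN1 hhβ j
      (by linarith) (fun k hk => ⟨(hoff k hk).2, (hoff k hk).1⟩)
    exact ⟨k, hk, hne.symm⟩
  · exact rotation_key z w hz hw β hβ0 hβπ N hN1 hhβ (-j)
      (by push_cast; linarith) hoff
end

section
/- Pairwise distinguishability under the designed pilot (core of Proposition 1): let M, N ≥ 1, and let h_u, h_v : Fin M → ℂ have all entries nonzero. Let β = max over m ∈ Fin M of the circular distance modulo 2π between arg(h_u m) and arg(h_v m), and assume β > 0 and N ≥ π/(2β). Let x : Fin N → ℂ be a uniform-phase pilot sequence of length N, and assume that h_u m · x k and h_v m · x k are off-axis for all m ∈ Fin M and k ∈ Fin N. Then the quantized measurement matrices differ: there exist m ∈ Fin M and k ∈ Fin N with q(h_u m · x k) ≠ q(h_v m · x k). -/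
/-- A uniform-phase pilot sequence of length `N`: `x k = r k · exp(I·(k+1)·π/(2N))` with
positive magnitudes `r k`; its phases uniformly sample `(0, π/2]`. -/
def IsUniformPhasePilot (N : ℕ) (x : Fin N → ℂ) : Prop :=
  ∃ r : Fin N → ℝ, (∀ k, 0 < r k) ∧
    ∀ k : Fin N, x k = (r k : ℂ) *
      Complex.exp (Complex.I * (((((k : ℕ) : ℝ) + 1) * Real.pi / (2 * N) : ℝ) : ℂ))

open Real

section Aux

lemma sin_sign_quadrant (φ : ℝ) (r : ℤ) (hr0 : 0 ≤ r) (hr4 : r < 4)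
    (h1 : (r:ℝ)*(π/2) < φ) (h2 : φ < ((r:ℝ)+1)*(π/2)) :
    (0 < Real.sin φ ↔ r = 0 ∨ r = 1) := by
  have hπ := Real.pi_pos
  interval_cases r <;> push_cast at h1 h2 <;> norm_num
  · exact Real.sin_pos_of_pos_of_lt_pi (by nlinarith) (by nlinarith)
  · exact Real.sin_pos_of_pos_of_lt_pi (by nlinarith) (by nlinarith)
  · have h3 : 0 < Real.sin (φ - π) :=
      Real.sin_pos_of_pos_of_lt_pi (by nlinarith) (by nlinarith)
    rw [Real.sin_sub_pi] at h3
    linarith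
  · have h3 : 0 < Real.sin (φ - π) :=
      Real.sin_pos_of_pos_of_lt_pi (by nlinarith) (by nlinarith)
    rw [Real.sin_sub_pi] at h3
    linarith

lemma sin_pos_iff_floor (ψ : ℝ) (n : ℤ) (h1 : (n:ℝ) * (π/2) < ψ) (h2 : ψ < ((n:ℝ)+1) * (π/2)) :
    (0 < Real.sin ψ ↔ n % 4 = 0 ∨ n % 4 = 1) := by
  have hn4 : n = 4*(n/4) + n % 4 := by omega
  have hr0 : 0 ≤ n % 4 := Int.emod_nonneg n (by norm_num)
  have hr4 : n % 4 < 4 := Int.emod_lt_of_pos n (by norm_num)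
  have hcast : (n:ℝ) = 4*((n/4 : ℤ):ℝ) + ((n % 4 : ℤ):ℝ) := by exact_mod_cast hn4
  have hψ : Real.sin ψ = Real.sin (ψ - ((n/4:ℤ):ℝ)*(2*π)) := by
    rw [← Real.sin_add_int_mul_two_pi (ψ - ((n/4:ℤ):ℝ)*(2*π)) (n/4)]
    ring_nf
  rw [hψ]
  exact sin_sign_quadrant _ (n % 4) hr0 hr4 (by nlinarith) (by nlinarith)

lemma cos_pos_iff_floor (ψ : ℝ) (n : ℤ) (h1 : (n:ℝ) * (π/2) < ψ) (h2 : ψ < ((n:ℝ)+1) * (π/2)) :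
    (0 < Real.cos ψ ↔ n % 4 = 3 ∨ n % 4 = 0) := by
  have h := sin_pos_iff_floor (ψ + π/2) (n+1) (by push_cast; linarith) (by push_cast; linarith)
  rw [Real.sin_add_pi_div_two] at h
  rw [h]
  omega

lemma floor_window (ψ : ℝ) (hs : Real.sin ψ ≠ 0) (hc : Real.cos ψ ≠ 0) :
    ((⌊ψ / (π/2)⌋ : ℝ)) * (π/2) < ψ ∧ ψ < ((⌊ψ / (π/2)⌋ : ℝ) + 1) * (π/2) := by
  have hπ : (0:ℝ) < π/2 := by positivity
  have h1 : ((⌊ψ / (π/2)⌋ : ℝ)) * (π/2) ≤ ψ := by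
    have := Int.floor_le (ψ / (π/2))
    calc ((⌊ψ / (π/2)⌋ : ℝ)) * (π/2) ≤ (ψ / (π/2)) * (π/2) := by nlinarith
    _ = ψ := by field_simp
  have h2 : ψ < ((⌊ψ / (π/2)⌋ : ℝ) + 1) * (π/2) := by
    have := Int.lt_floor_add_one (ψ / (π/2))
    calc ψ = (ψ / (π/2)) * (π/2) := by field_simp
    _ < ((⌊ψ / (π/2)⌋ : ℝ) + 1) * (π/2) := by nlinarith
  refine ⟨lt_of_le_of_ne h1 ?_, h2⟩
  intro heq
  set n := ⌊ψ / (π/2)⌋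
  rcases Int.even_or_odd n with ⟨l, hl⟩ | ⟨l, hl⟩
  · apply hs
    rw [Real.sin_eq_zero_iff]
    exact ⟨l, by rw [← heq, hl]; push_cast; ring⟩
  · apply hc
    rw [Real.cos_eq_zero_iff]
    exact ⟨l, by rw [← heq, hl]; push_cast; ring⟩

lemma mod4_eq (ψ φ : ℝ) (n m : ℤ)
    (hn1 : (n:ℝ)*(π/2) < ψ) (hn2 : ψ < ((n:ℝ)+1)*(π/2))
    (hm1 : (m:ℝ)*(π/2) < φ) (hm2 : φ < ((m:ℝ)+1)*(π/2))
    (h1 : 0 < Real.sin ψ ↔ 0 < Real.sin φ)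
    (h2 : 0 < Real.cos ψ ↔ 0 < Real.cos φ) : n % 4 = m % 4 := by
  have a1 := sin_pos_iff_floor ψ n hn1 hn2
  have a2 := sin_pos_iff_floor φ m hm1 hm2
  have b1 := cos_pos_iff_floor ψ n hn1 hn2
  have b2 := cos_pos_iff_floor φ m hm1 hm2
  have c1 : (n % 4 = 0 ∨ n % 4 = 1) ↔ (m % 4 = 0 ∨ m % 4 = 1) := a1.symm.trans (h1.trans a2)
  have c2 : (n % 4 = 3 ∨ n % 4 = 0) ↔ (m % 4 = 3 ∨ m % 4 = 0) := b1.symm.trans (h2.trans b2)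
  omega

lemma master (N : ℕ) (a ρ δ : ℝ) (hδ0 : 0 < δ) (hδρ : δ ≤ ρ) (hρπ : ρ ≤ π)
    (hNδ : (N:ℝ) * δ = π/2)
    (H : ∀ j : ℕ, j < N →
      (Real.sin (a + ((j:ℝ)+1)*δ) ≠ 0 ∧ Real.cos (a + ((j:ℝ)+1)*δ) ≠ 0) ∧
      (Real.sin (a + ρ + ((j:ℝ)+1)*δ) ≠ 0 ∧ Real.cos (a + ρ + ((j:ℝ)+1)*δ) ≠ 0) ∧
      (0 < Real.sin (a + ((j:ℝ)+1)*δ) ↔ 0 < Real.sin (a + ρ + ((j:ℝ)+1)*δ)) ∧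
      (0 < Real.cos (a + ((j:ℝ)+1)*δ) ↔ 0 < Real.cos (a + ρ + ((j:ℝ)+1)*δ))) : False := by
  have hπ : (0:ℝ) < π/2 := by positivity
  have hN0 : 0 < N := by
    rcases Nat.eq_zero_or_pos N with h | h
    · exfalso; rw [h] at hNδ; push_cast at hNδ; linarith
    · exact h
  set F : ℕ → ℤ := fun j => ⌊(a + ((j:ℝ)+1)*δ) / (π/2)⌋ with hF
  set G : ℕ → ℤ := fun j => ⌊(a + ρ + ((j:ℝ)+1)*δ) / (π/2)⌋ with hG
  have hFw : ∀ j < N, ((F j : ℝ)) * (π/2) < a + ((j:ℝ)+1)*δ ∧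
      a + ((j:ℝ)+1)*δ < ((F j : ℝ) + 1) * (π/2) :=
    fun j hj => floor_window _ ((H j hj).1.1) ((H j hj).1.2)
  have hGw : ∀ j < N, ((G j : ℝ)) * (π/2) < a + ρ + ((j:ℝ)+1)*δ ∧
      a + ρ + ((j:ℝ)+1)*δ < ((G j : ℝ) + 1) * (π/2) :=
    fun j hj => floor_window _ ((H j hj).2.1.1) ((H j hj).2.1.2)
  have hmod : ∀ j < N, F j % 4 = G j % 4 := fun j hj =>
    mod4_eq _ _ _ _ (hFw j hj).1 (hFw j hj).2 (hGw j hj).1 (hGw j hj).2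
      ((H j hj).2.2.1) ((H j hj).2.2.2)
  have cmp : ∀ p q : ℤ, (p:ℝ)*(π/2) < (q:ℝ)*(π/2) → p < q := by
    intro p q h
    have : (p:ℝ) < q := by nlinarith
    exact_mod_cast this
  by_cases hhalf : ρ < π/2
  · have hGF : ∀ j < N, G j = F j := by
      intro j hj
      have w1 := hFw j hj; have w2 := hGw j hj
      have l1 : F j < G j + 1 := by
        apply cmp
        have : ((G j : ℝ) + 1) * (π/2) = ((G j + 1 : ℤ):ℝ) * (π/2) := by push_cast; ring
        nlinarith [w1.1, w2.2]
      have l2 : G j < F j + 2 := by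
        apply cmp
        have e : ((F j + 2 : ℤ):ℝ) * (π/2) = ((F j : ℝ) + 1) * (π/2) + π/2 := by push_cast; ring
        push_cast
        nlinarith [w2.1, w1.2]
      have := hmod j hj
      omega
    have hkey : ∀ j < N, a + ρ + ((j:ℝ)+1)*δ < ((F j : ℝ) + 1) * (π/2) := by
      intro j hj
      have := (hGw j hj).2
      rw [hGF j hj] at this
      exact this
    have h0N : 0 < N := hN0
    have hconst : ∀ j, j < N → F j = F 0 := by
      intro j
      induction j with
      | zero => intro _; rfl
      | succ i ih =>
        intro hj
        have hi : i < N := by omega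
        have hFi := ih hi
        have w := hFw i hi
        have k := hkey i hi
        have b1 : ((F i : ℝ)) * (π/2) < a + (((i+1:ℕ):ℝ)+1)*δ := by push_cast; nlinarith [w.1]
        have b2 : a + (((i+1:ℕ):ℝ)+1)*δ < ((F i : ℝ) + 1) * (π/2) := by push_cast; nlinarith
        have hfl : ⌊(a + (((i+1:ℕ):ℝ)+1)*δ) / (π/2)⌋ = F i := by
          rw [Int.floor_eq_iff]
          refine ⟨?_, ?_⟩
          · rw [le_div_iff₀ hπ]; linarith
          · rw [div_lt_iff₀ hπ]; push_cast; push_cast at b2; linarith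
        have : F (i+1) = F i := hfl
        omega
    have hN1 : N - 1 < N := by omega
    have hlast := hkey (N-1) hN1
    rw [hconst (N-1) hN1] at hlast
    have hNcast : (((N-1:ℕ):ℝ)+1) = (N:ℝ) := by
      have : ((N-1)+1 : ℕ) = N := by omega
      calc (((N-1:ℕ):ℝ)+1) = (((N-1)+1 : ℕ) : ℝ) := by push_cast; ring
      _ = (N:ℝ) := by rw [this]
    rw [hNcast, hNδ] at hlast
    have w0 := (hFw 0 h0N).1
    push_cast at w0
    nlinarith
  · push_neg at hhalf
    have w1 := hFw 0 hN0; have w2 := hGw 0 hN0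
    have l1 : F 0 + 1 < G 0 + 1 := by
      apply cmp
      push_cast
      nlinarith [w1.1, w2.2]
    have l2 : G 0 < F 0 + 3 := by
      apply cmp
      push_cast
      nlinarith [w2.1, w1.2]
    have := hmod 0 hN0
    omega

lemma circDist_attained_s4 (a b : ℝ) :
    ∃ (y : ℝ) (j : ℤ), a - b = y + 2*π*j ∧ |y| = circDist a b ∧ |y| ≤ π := by
  have hπ := Real.pi_pos
  set x := a - b with hx
  set j0 : ℤ := round (x / (2*π)) with hj0
  set y := x - 2*π*j0 with hy
  have h2π : (0:ℝ) < 2*π := by positivity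
  have h1 : |y| ≤ π := by
    have hab := abs_sub_round (x / (2*π))
    have hyy : y = (x/(2*π) - j0) * (2*π) := by field_simp [hy]; exact hy
    rw [hyy, abs_mul, abs_of_pos h2π]
    nlinarith [hab]
  refine ⟨y, j0, by rw [hy]; ring, ?_, h1⟩
  have hbdd : BddBelow (Set.range fun j : ℤ => |x - 2*π*j|) := by
    refine ⟨0, ?_⟩
    rintro _ ⟨j, rfl⟩
    positivity
  apply le_antisymm
  · apply le_ciInf
    intro j
    by_cases hj : j = j0
    · subst hj; rfl
    · have hj1 : (1:ℝ) ≤ |((j0 - j : ℤ):ℝ)| := by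
        have : j0 - j ≠ 0 := sub_ne_zero.mpr (Ne.symm hj)
        have := Int.one_le_abs this
        calc (1:ℝ) = ((1:ℤ):ℝ) := by norm_num
        _ ≤ ((|j0 - j| : ℤ) : ℝ) := by exact_mod_cast this
        _ = |((j0 - j : ℤ):ℝ)| := by push_cast; ring_nf
      have he : x - 2*π*j = y + 2*π*((j0 - j : ℤ):ℝ) := by rw [hy]; push_cast; ring
      have hlow : 2*π*|((j0 - j : ℤ):ℝ)| - |y| ≤ |x - 2*π*j| := by
        rw [he]
        have := abs_add_le (y + 2*π*((j0 - j : ℤ):ℝ)) (-y)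
        rw [show y + 2*π*((j0 - j : ℤ):ℝ) + -y = 2*π*((j0 - j : ℤ):ℝ) from by ring, abs_neg] at this
        have h2 : |2*π*((j0 - j : ℤ):ℝ)| = 2*π*|((j0 - j : ℤ):ℝ)| := by
          rw [abs_mul, abs_of_pos h2π]
        linarith [this, h2.symm.le]
      nlinarith
  · exact ciInf_le hbdd j0

lemma mul_pilot_form (h : ℂ) (R θ : ℝ) :
    h * ((R:ℂ) * Complex.exp (Complex.I * (θ:ℂ))) =
      ((‖h‖ * R : ℝ) : ℂ) * Complex.exp (((h.arg + θ : ℝ):ℂ) * Complex.I) := by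
  conv_lhs => rw [← Complex.norm_mul_exp_arg_mul_I h]
  rw [show ((‖h‖ : ℂ) * Complex.exp ((h.arg:ℂ) * Complex.I)) * ((R:ℂ) * Complex.exp (Complex.I * (θ:ℂ))) =
      ((‖h‖ : ℂ) * (R:ℂ)) * (Complex.exp ((h.arg:ℂ) * Complex.I) * Complex.exp (Complex.I * (θ:ℂ))) from by ring,
    ← Complex.exp_add]
  push_cast
  ring_nf

lemma pos_iff_of_sign_eq {s t : ℝ} (hs : s ≠ 0) (ht : t ≠ 0) (h : Real.sign s = Real.sign t) :
    (0 < s ↔ 0 < t) := by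
  rcases hs.lt_or_gt with h1 | h1 <;> rcases ht.lt_or_gt with h2 | h2
  · exact ⟨fun hh => absurd hh (by linarith), fun hh => absurd hh (by linarith)⟩
  · rw [Real.sign_of_neg h1, Real.sign_of_pos h2] at h; norm_num at h
  · rw [Real.sign_of_pos h1, Real.sign_of_neg h2] at h; norm_num at h
  · exact ⟨fun _ => h2, fun _ => h1⟩

end Aux

/-- Pairwise distinguishability under the designed pilot (core of Proposition 1):
if `β` is the maximum per-antenna circular angular distance between the two channels,
`β > 0`, and `N ≥ π/(2β)`, then the quantized measurement matrices differ. -/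
theorem pairwise_distinguishable (M N : ℕ) (hM : 1 ≤ M) (hN : 1 ≤ N)
    (hu hv : Fin M → ℂ) (hu0 : ∀ m, hu m ≠ 0) (hv0 : ∀ m, hv m ≠ 0)
    (β : ℝ)
    (hβ : IsGreatest
      (Set.range fun m : Fin M => circDist (Complex.arg (hu m)) (Complex.arg (hv m))) β)
    (hβ0 : 0 < β)
    (hNβ : Real.pi / (2 * β) ≤ (N : ℝ))
    (x : Fin N → ℂ) (hx : IsUniformPhasePilot N x)
    (hoff : ∀ (m : Fin M) (k : Fin N), offAxis (hu m * x k) ∧ offAxis (hv m * x k)) :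
    ∃ (m : Fin M) (k : Fin N), q (hu m * x k) ≠ q (hv m * x k) := by
  by_contra hcon
  push_neg at hcon
  obtain ⟨r, hr, hxk⟩ := hx
  obtain ⟨m₀, hm₀⟩ := hβ.1
  set α := Complex.arg (hu m₀) with hα
  set γ := Complex.arg (hv m₀) with hγ
  obtain ⟨y, j₀, hyj, hyc, hyπ⟩ := circDist_attained_s4 α γ
  have hβy : |y| = β := by rw [hyc]; exact hm₀
  have hπ := Real.pi_pos
  have hN0 : (0:ℝ) < (N:ℝ) := by exact_mod_cast hN
  set δ : ℝ := π / (2*(N:ℝ)) with hδ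
  have hδ0 : 0 < δ := by positivity
  have hNδ : (N:ℝ) * δ = π/2 := by rw [hδ]; field_simp
  have hδβ : δ ≤ β := by
    have h1 : π ≤ (N:ℝ) * (2*β) := by
      rw [div_le_iff₀ (by positivity : (0:ℝ) < 2*β)] at hNβ
      linarith
    rw [hδ, div_le_iff₀ (by positivity : (0:ℝ) < 2*(N:ℝ))]
    nlinarith
  -- per-channel-entry facts
  have fact : ∀ (h : ℂ), h ≠ 0 → ∀ k : Fin N, offAxis (h * x k) →
      (Real.sin (Complex.arg h + (((k:ℕ):ℝ)+1)*δ) ≠ 0 ∧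
        Real.cos (Complex.arg h + (((k:ℕ):ℝ)+1)*δ) ≠ 0) ∧
      ((0 < (h * x k).re ↔ 0 < Real.cos (Complex.arg h + (((k:ℕ):ℝ)+1)*δ)) ∧
        (0 < (h * x k).im ↔ 0 < Real.sin (Complex.arg h + (((k:ℕ):ℝ)+1)*δ))) := by
    intro h hh k hoffk
    have hRpos : 0 < ‖h‖ * r k := mul_pos (norm_pos_iff.mpr hh) (hr k)
    have hθ : (((k:ℕ):ℝ)+1) * π / (2*(N:ℝ)) = (((k:ℕ):ℝ)+1)*δ := by
      rw [hδ]; ring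
    have hform : h * x k = ((‖h‖ * r k : ℝ) : ℂ) *
        Complex.exp (((Complex.arg h + (((k:ℕ):ℝ)+1)*δ : ℝ):ℂ) * Complex.I) := by
      rw [hxk k, mul_pilot_form, hθ]
    have hre : (h * x k).re = (‖h‖ * r k) * Real.cos (Complex.arg h + (((k:ℕ):ℝ)+1)*δ) := by
      rw [hform, Complex.re_ofReal_mul, Complex.exp_ofReal_mul_I_re]
    have him : (h * x k).im = (‖h‖ * r k) * Real.sin (Complex.arg h + (((k:ℕ):ℝ)+1)*δ) := by
      rw [hform, Complex.im_ofReal_mul, Complex.exp_ofReal_mul_I_im]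
    obtain ⟨hre0, him0⟩ := hoffk
    rw [hre] at hre0 ⊢
    rw [him] at him0 ⊢
    refine ⟨⟨fun hs => him0 (by rw [hs]; ring), fun hc => hre0 (by rw [hc]; ring)⟩, ?_, ?_⟩
    · exact mul_pos_iff_of_pos_left hRpos
    · exact mul_pos_iff_of_pos_left hRpos
  -- sign equalities from hcon
  have signs : ∀ k : Fin N,
      (0 < Real.cos (α + (((k:ℕ):ℝ)+1)*δ) ↔ 0 < Real.cos (γ + (((k:ℕ):ℝ)+1)*δ)) ∧
      (0 < Real.sin (α + (((k:ℕ):ℝ)+1)*δ) ↔ 0 < Real.sin (γ + (((k:ℕ):ℝ)+1)*δ)) := by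
    intro k
    obtain ⟨hou, hov⟩ := hoff m₀ k
    have fu := fact (hu m₀) (hu0 m₀) k hou
    have fv := fact (hv m₀) (hv0 m₀) k hov
    have hq := hcon m₀ k
    have hqre : Real.sign (hu m₀ * x k).re = Real.sign (hv m₀ * x k).re :=
      congrArg Prod.fst hq
    have hqim : Real.sign (hu m₀ * x k).im = Real.sign (hv m₀ * x k).im :=
      congrArg Prod.snd hq
    have hpre := pos_iff_of_sign_eq hou.1 hov.1 hqre
    have hpim := pos_iff_of_sign_eq hou.2 hov.2 hqim
    exact ⟨(fu.2.1.symm.trans hpre).trans fv.2.1, (fu.2.2.symm.trans hpim).trans fv.2.2⟩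
  -- nonvanishing
  have nz : ∀ k : Fin N,
      (Real.sin (α + (((k:ℕ):ℝ)+1)*δ) ≠ 0 ∧ Real.cos (α + (((k:ℕ):ℝ)+1)*δ) ≠ 0) ∧
      (Real.sin (γ + (((k:ℕ):ℝ)+1)*δ) ≠ 0 ∧ Real.cos (γ + (((k:ℕ):ℝ)+1)*δ) ≠ 0) := by
    intro k
    obtain ⟨hou, hov⟩ := hoff m₀ k
    exact ⟨(fact (hu m₀) (hu0 m₀) k hou).1, (fact (hv m₀) (hv0 m₀) k hov).1⟩
  have hy0 : y ≠ 0 := by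
    intro h
    rw [h] at hβy
    simp at hβy
    linarith
  rcases hy0.lt_or_gt with hyneg | hypos
  · -- y < 0 : use a := α, ρ := -y ; then α + -y + t = (γ + t) + j₀·2π
    have hβ' : β = -y := by rw [← hβy, abs_of_neg hyneg]
    have shift_sin : ∀ t : ℝ, Real.sin (α + -y + t) = Real.sin (γ + t) := by
      intro t
      rw [show α + -y + t = (γ + t) + (j₀:ℝ)*(2*π) from by linarith [hyj],
        Real.sin_add_int_mul_two_pi (γ + t) j₀]
    have shift_cos : ∀ t : ℝ, Real.cos (α + -y + t) = Real.cos (γ + t) := by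
      intro t
      rw [show α + -y + t = (γ + t) + (j₀:ℝ)*(2*π) from by linarith [hyj],
        Real.cos_add_int_mul_two_pi (γ + t) j₀]
    apply master N α (-y) δ hδ0 (by linarith) (by linarith [hyπ, abs_of_neg hyneg]) hNδ
    intro j hj
    have s := signs ⟨j, hj⟩
    have n := nz ⟨j, hj⟩
    simp only [shift_sin, shift_cos]
    exact ⟨n.1, n.2, s.2, s.1⟩
  · -- y > 0 : use a := γ, ρ := y ; then γ + y + t = (α + t) + (-j₀)·2π
    have hβ' : β = y := by rw [← hβy, abs_of_pos hypos]
    have shift_sin : ∀ t : ℝ, Real.sin (γ + y + t) = Real.sin (α + t) := by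
      intro t
      rw [show γ + y + t = (α + t) + ((-j₀ : ℤ):ℝ)*(2*π) from by push_cast; linarith [hyj],
        Real.sin_add_int_mul_two_pi (α + t) (-j₀)]
    have shift_cos : ∀ t : ℝ, Real.cos (γ + y + t) = Real.cos (α + t) := by
      intro t
      rw [show γ + y + t = (α + t) + ((-j₀ : ℤ):ℝ)*(2*π) from by push_cast; linarith [hyj],
        Real.cos_add_int_mul_two_pi (α + t) (-j₀)]
    apply master N γ y δ hδ0 (by linarith) (by linarith [hyπ, abs_of_pos hypos]) hNδ
    intro j hj
    have s := signs ⟨j, hj⟩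
    have n := nz ⟨j, hj⟩
    simp only [shift_sin, shift_cos]
    exact ⟨n.2, n.1, s.2.symm, s.1.symm⟩
end

section
/- Proposition 1 (existence of the quantized-measurements-to-channel mapping): let M, N ≥ 1 and let S be a finite set of channels h : Fin M → ℂ, each with all entries nonzero. Define α = min over all pairs of distinct h_u, h_v ∈ S of (max over m ∈ Fin M of the circular distance modulo 2π between arg(h_u m) and arg(h_v m)), and assume α > 0. Let x : Fin N → ℂ be a uniform-phase pilot sequence of length N with N ≥ π/(2α), and assume that h m · x k is off-axis for every h ∈ S, m ∈ Fin M, k ∈ Fin N. Then the map sending h ∈ S to its quantized measurement matrix (m, k) ↦ q(h m · x k) is injective on S; in particular a mapping Φ from quantized measurement matrices back to channels exists. -/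
open Real


lemma quadrant_signs (ψ : ℝ) (hc : Real.cos ψ ≠ 0) (hs : Real.sin ψ ≠ 0) :
    (0 < Real.sin ψ ↔ (⌊2*ψ/π⌋ % 4 = 0 ∨ ⌊2*ψ/π⌋ % 4 = 1)) ∧
    (0 < Real.cos ψ ↔ (⌊2*ψ/π⌋ % 4 = 0 ∨ ⌊2*ψ/π⌋ % 4 = 3)) := by
  have hπ : 0 < π := Real.pi_pos
  set n : ℤ := ⌊2*ψ/π⌋ with hn
  have h1 : (n : ℝ) ≤ 2*ψ/π := Int.floor_le _
  have h2 : 2*ψ/π < n + 1 := Int.lt_floor_add_one _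
  have hne : (n : ℝ) ≠ 2*ψ/π := by
    intro h
    have hψ : ψ = n * (π/2) := by field_simp at h ⊢; linarith
    rcases Int.even_or_odd n with ⟨m, hm⟩ | ⟨m, hm⟩
    · apply hs
      rw [hψ, hm]
      push_cast
      rw [show ((m:ℝ) + m) * (π/2) = m * π by ring]
      exact Real.sin_int_mul_pi m
    · apply hc
      rw [hψ, hm]
      push_cast
      rw [show (2*(m:ℝ) + 1) * (π/2) = m * π + π/2 by ring]
      rw [Real.cos_add_pi_div_two]
      simp [Real.sin_int_mul_pi]
  have hl : (n : ℝ) * (π/2) < ψ := by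
    have := lt_of_le_of_ne h1 hne
    rw [lt_div_iff₀ (by linarith : (0:ℝ) < π)] at this
    linarith
  have hr : ψ < ((n : ℝ) + 1) * (π/2) := by
    rw [div_lt_iff₀ (by linarith : (0:ℝ) < π)] at h2
    linarith
  obtain ⟨q', r, hr04, hnq, hmod⟩ : ∃ q' r : ℤ, (r = 0 ∨ r = 1 ∨ r = 2 ∨ r = 3) ∧ n = 4*q' + r ∧ n % 4 = r :=
    ⟨n / 4, n % 4, by omega, by omega, rfl⟩
  set t : ℝ := ψ + ((-q' : ℤ) : ℝ) * (2 * π) with ht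
  have hsin : Real.sin t = Real.sin ψ := Real.sin_add_int_mul_two_pi ψ (-q')
  have hcos : Real.cos t = Real.cos ψ := Real.cos_add_int_mul_two_pi ψ (-q')
  have hl' : ((4:ℝ)*q' + r) * (π/2) < ψ := by
    rw [hnq] at hl; push_cast at hl; linarith
  have hr' : ψ < ((4:ℝ)*q' + r + 1) * (π/2) := by
    rw [hnq] at hr; push_cast at hr; linarith
  have htl : (r : ℝ) * (π/2) < t := by rw [ht]; push_cast; linarith
  have htr : t < ((r : ℝ) + 1) * (π/2) := by rw [ht]; push_cast; linarith
  rw [← hsin, ← hcos, hmod]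
  rcases hr04 with h | h | h | h <;> subst h <;> push_cast at htl htr
  · have hsp : 0 < Real.sin t := Real.sin_pos_of_pos_of_lt_pi (by linarith) (by linarith)
    have hcp : 0 < Real.cos t := Real.cos_pos_of_mem_Ioo ⟨by linarith, by linarith⟩
    exact ⟨⟨fun _ => Or.inl rfl, fun _ => hsp⟩, ⟨fun _ => Or.inl rfl, fun _ => hcp⟩⟩
  · have hsp : 0 < Real.sin t := Real.sin_pos_of_pos_of_lt_pi (by linarith) (by linarith)
    have hcp : Real.cos t < 0 := Real.cos_neg_of_pi_div_two_lt_of_lt (by linarith) (by linarith)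
    exact ⟨⟨fun _ => Or.inr rfl, fun _ => hsp⟩,
      ⟨fun h => absurd h (not_lt.mpr hcp.le), fun h => by rcases h with h | h <;> norm_num at h⟩⟩
  · have hsp : Real.sin t < 0 := by
      have h0 : 0 < Real.sin (t - π) := Real.sin_pos_of_pos_of_lt_pi (by linarith) (by linarith)
      rw [Real.sin_sub_pi] at h0; linarith
    have hcp : Real.cos t < 0 := Real.cos_neg_of_pi_div_two_lt_of_lt (by linarith) (by linarith)
    exact ⟨⟨fun h => absurd h (not_lt.mpr hsp.le), fun h => by rcases h with h | h <;> norm_num at h⟩,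
      ⟨fun h => absurd h (not_lt.mpr hcp.le), fun h => by rcases h with h | h <;> norm_num at h⟩⟩
  · have hsp : Real.sin t < 0 := by
      have h0 : 0 < Real.sin (t - π) := Real.sin_pos_of_pos_of_lt_pi (by linarith) (by linarith)
      rw [Real.sin_sub_pi] at h0; linarith
    have hcp : 0 < Real.cos t := by
      have h0 : Real.cos (t - π) < 0 := Real.cos_neg_of_pi_div_two_lt_of_lt (by linarith) (by linarith)
      rw [Real.cos_sub_pi] at h0; linarith
    exact ⟨⟨fun h => absurd h (not_lt.mpr hsp.le), fun h => by rcases h with h | h <;> norm_num at h⟩,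
      ⟨fun _ => Or.inr rfl, fun _ => hcp⟩⟩


lemma ediv_step (N i k : ℤ) (hN : 0 < N) (h1 : 1 ≤ k) (h2 : k ≤ N) :
    (i + k) / N = i / N + (if i % N + k < N then 0 else 1) := by
  have hi : i = N * (i / N) + i % N := (Int.mul_ediv_add_emod i N).symm
  have hmod : 0 ≤ i % N ∧ i % N < N := ⟨Int.emod_nonneg i hN.ne', Int.emod_lt_of_pos i hN⟩
  split_ifs with hlt
  · have : i + k = (i % N + k) + N * (i / N) := by omega
    rw [this, Int.add_mul_ediv_left _ _ hN.ne']
    rw [Int.ediv_eq_zero_of_lt (by omega) hlt]; ring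
  · have : i + k = (i % N + k - N) + N * (i / N + 1) := by ring_nf; omega
    rw [this, Int.add_mul_ediv_left _ _ hN.ne']
    rw [Int.ediv_eq_zero_of_lt (by omega) (by omega)]; ring
lemma int_key (N i i' : ℤ) (hN : 0 < N)
    (h : ∀ k : ℤ, 1 ≤ k → k ≤ N → ((i + k) / N) % 4 = ((i' + k) / N) % 4) :
    (4 * N) ∣ (i - i') := by
  set r := i % N with hr
  set r' := i' % N with hr'
  set q := i / N with hq
  set q' := i' / N with hq'
  have hi : i = N * q + r := (Int.mul_ediv_add_emod i N).symm
  have hi' : i' = N * q' + r' := (Int.mul_ediv_add_emod i' N).symm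
  have hrb : 0 ≤ r ∧ r < N := ⟨Int.emod_nonneg i hN.ne', Int.emod_lt_of_pos i hN⟩
  have hrb' : 0 ≤ r' ∧ r' < N := ⟨Int.emod_nonneg i' hN.ne', Int.emod_lt_of_pos i' hN⟩
  -- at k = N
  have hNk := h N (by omega) le_rfl
  rw [ediv_step N i N hN (by omega) le_rfl, ediv_step N i' N hN (by omega) le_rfl] at hNk
  rw [if_neg (by omega), if_neg (by omega)] at hNk
  have hqq : (q + 1) % 4 = (q' + 1) % 4 := hNk
  have hrr : r = r' := by
    by_contra hne
    rcases lt_or_gt_of_ne hne with hlt | hlt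
    · have hk := h (N - r') (by omega) (by omega)
      rw [ediv_step N i _ hN (by omega) (by omega), ediv_step N i' _ hN (by omega) (by omega)] at hk
      rw [if_pos (by omega), if_neg (by omega)] at hk
      omega
    · have hk := h (N - r) (by omega) (by omega)
      rw [ediv_step N i _ hN (by omega) (by omega), ediv_step N i' _ hN (by omega) (by omega)] at hk
      rw [if_neg (by omega), if_pos (by omega)] at hk
      omega
  obtain ⟨t, ht⟩ : (4:ℤ) ∣ (q - q') := by omega
  exact ⟨t, by rw [hi, hi', hrr]; linear_combination N * ht⟩


lemma floor_shift (N : ℤ) (hN : 0 < N) (a : ℝ) (k : ℤ) :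
    ⌊2 * (a + k * (π / (2 * N))) / π⌋ = (⌊a / (π / (2 * N))⌋ + k) / N := by
  have hπ : (0:ℝ) < π := Real.pi_pos
  have hN' : (0:ℝ) < (N:ℝ) := by exact_mod_cast hN
  set δ : ℝ := π / (2 * N) with hδ
  have hδ0 : 0 < δ := by positivity
  set i : ℤ := ⌊a / δ⌋ with hi
  set m : ℤ := i + k with hm
  have h1 : (i : ℝ) ≤ a / δ := Int.floor_le _
  have h2 : a / δ < i + 1 := Int.lt_floor_add_one _
  have key : 2 * (a + k * δ) / π = (a / δ + k) / N := by
    rw [hδ]; field_simp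
  rw [key]
  have hdiv : m = N * (m / N) + m % N := (Int.mul_ediv_add_emod m N).symm
  have hmod : 0 ≤ m % N ∧ m % N < N := ⟨Int.emod_nonneg m hN.ne', Int.emod_lt_of_pos m hN⟩
  apply Int.floor_eq_iff.mpr
  constructor
  · rw [le_div_iff₀ hN']
    have hc : ((m / N : ℤ) : ℝ) * N ≤ (m:ℝ) := by
      have : (N * (m / N) : ℤ) ≤ m := by omega
      have := (@Int.cast_le ℝ _ _ _).mpr this
      push_cast at this ⊢; linarith
    have hmr : (m : ℝ) = (i:ℝ) + k := by push_cast [hm]; ring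
    linarith
  · rw [div_lt_iff₀ hN']
    have hc : (m:ℝ) + 1 ≤ (((m / N : ℤ) : ℝ) + 1) * N := by
      have : m + 1 ≤ (m / N + 1) * N := by nlinarith [hmod.1, hmod.2, hdiv]
      have := (@Int.cast_le ℝ _ _ _).mpr this
      push_cast at this ⊢; linarith
    have hmr : (m : ℝ) = (i:ℝ) + k := by push_cast [hm]; ring
    push_cast
    linarith

lemma main_real (N : ℕ) (hN : 1 ≤ N) (a b : ℝ)
    (H : ∀ k : ℤ, 1 ≤ k → k ≤ N →
      Real.cos (a + k * (π / (2 * N))) ≠ 0 ∧ Real.sin (a + k * (π / (2 * N))) ≠ 0 ∧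
      Real.cos (b + k * (π / (2 * N))) ≠ 0 ∧ Real.sin (b + k * (π / (2 * N))) ≠ 0 ∧
      (0 < Real.cos (a + k * (π / (2 * N))) ↔ 0 < Real.cos (b + k * (π / (2 * N)))) ∧
      (0 < Real.sin (a + k * (π / (2 * N))) ↔ 0 < Real.sin (b + k * (π / (2 * N))))) :
    ∃ j : ℤ, |a - b - 2 * π * j| < π / (2 * N) := by
  have hπ : (0:ℝ) < π := Real.pi_pos
  have hNZ : (0:ℤ) < (N:ℤ) := by exact_mod_cast hN
  have hN' : (0:ℝ) < (N:ℝ) := by exact_mod_cast hN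
  set δ : ℝ := π / (2 * N) with hδ
  have hδ0 : 0 < δ := by positivity
  set i : ℤ := ⌊a / δ⌋ with hi
  set i' : ℤ := ⌊b / δ⌋ with hi'
  have hkey : ∀ k : ℤ, 1 ≤ k → k ≤ (N:ℤ) → ((i + k) / N) % 4 = ((i' + k) / N) % 4 := by
    intro k h1 h2
    obtain ⟨hca, hsa, hcb, hsb, hcc, hss⟩ := H k h1 (by exact_mod_cast h2)
    have qa := quadrant_signs (a + k * δ) hca hsa
    have qb := quadrant_signs (b + k * δ) hcb hsb
    have fsa := floor_shift (N:ℤ) hNZ a k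
    have fsb := floor_shift (N:ℤ) hNZ b k
    simp only [Int.cast_natCast] at fsa fsb
    rw [fsa] at qa
    rw [fsb] at qb
    have e1 := (qa.1.symm.trans (hss.trans qb.1))
    have e2 := (qa.2.symm.trans (hcc.trans qb.2))
    have hu : (i + k) / (N:ℤ) % 4 = 0 ∨ (i + k) / (N:ℤ) % 4 = 1 ∨
        (i + k) / (N:ℤ) % 4 = 2 ∨ (i + k) / (N:ℤ) % 4 = 3 := by omega
    have hv : (i' + k) / (N:ℤ) % 4 = 0 ∨ (i' + k) / (N:ℤ) % 4 = 1 ∨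
        (i' + k) / (N:ℤ) % 4 = 2 ∨ (i' + k) / (N:ℤ) % 4 = 3 := by omega
    rcases hu with h|h|h|h <;> rcases hv with h'|h'|h'|h' <;>
      rw [h, h'] at e1 e2 ⊢ <;> simp_all
  obtain ⟨t, ht⟩ := int_key N i i' hNZ hkey
  refine ⟨t, ?_⟩
  have h1 : (i : ℝ) ≤ a / δ := Int.floor_le _
  have h2 : a / δ < i + 1 := Int.lt_floor_add_one _
  have h3 : (i' : ℝ) ≤ b / δ := Int.floor_le _
  have h4 : b / δ < i' + 1 := Int.lt_floor_add_one _
  have hii : (i : ℝ) - i' = 4 * N * t := by exact_mod_cast congrArg (Int.cast : ℤ → ℝ) ht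
  have h2pi : 2 * π * t = ((i : ℝ) - i') * δ := by
    rw [hδ, hii]; field_simp; ring
  have ha : (i:ℝ) * δ ≤ a ∧ a < ((i:ℝ)+1) * δ := by
    constructor
    · rw [← le_div_iff₀ hδ0] at *; exact h1
    · rw [← div_lt_iff₀ hδ0] at *; exact h2
  have hb : (i':ℝ) * δ ≤ b ∧ b < ((i':ℝ)+1) * δ := by
    constructor
    · rw [← le_div_iff₀ hδ0] at *; exact h3
    · rw [← div_lt_iff₀ hδ0] at *; exact h4
  rw [h2pi, abs_lt]
  constructor <;> nlinarith [ha.1, ha.2, hb.1, hb.2]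

lemma sign_iff (u v : ℝ) (hu : u ≠ 0) (hv : v ≠ 0) (h : Real.sign u = Real.sign v) :
    (0 < u ↔ 0 < v) := by
  rcases hu.lt_or_gt with h1 | h1 <;> rcases hv.lt_or_gt with h2 | h2
  · exact ⟨fun h => absurd h (not_lt.mpr h1.le), fun h => absurd h (not_lt.mpr h2.le)⟩
  · rw [Real.sign_of_neg h1, Real.sign_of_pos h2] at h; norm_num at h
  · rw [Real.sign_of_pos h1, Real.sign_of_neg h2] at h; norm_num at h
  · exact ⟨fun _ => h2, fun _ => h1⟩

/-- decomposition of the product into magnitude and phase -/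
lemma prod_decomp (z : ℂ) (hz : z ≠ 0) (c θ : ℝ) :
    z * ((c : ℂ) * Complex.exp (Complex.I * (θ : ℂ))) =
      ((‖z‖ * c : ℝ) : ℂ) *
        Complex.exp (((Complex.arg z + θ : ℝ)) * Complex.I) := by
  conv_lhs => rw [← Complex.norm_mul_exp_arg_mul_I z]
  have h1 : (‖z‖ : ℂ) * Complex.exp ((z.arg : ℂ) * Complex.I) *
      ((c : ℂ) * Complex.exp (Complex.I * (θ : ℂ))) =
      ((‖z‖ * c : ℝ) : ℂ) *
        (Complex.exp ((z.arg : ℂ) * Complex.I) * Complex.exp (Complex.I * (θ : ℂ))) := by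
    push_cast; ring
  rw [h1, ← Complex.exp_add]
  congr 2
  push_cast; ring


/-- Proposition 1: with `α` the minimum over distinct channel pairs of the maximum
per-antenna circular angular distance, `α > 0`, and a uniform-phase pilot of length
`N ≥ π/(2α)`, the map from channels to quantized measurement matrices is injective on the
candidate set `S`; hence the mapping `Φ` from measurements to channels exists. -/
theorem quantized_measurements_to_channel_mapping_exists
    (M N : ℕ) (hM : 1 ≤ M) (hN : 1 ≤ N)
    (S : Finset (Fin M → ℂ)) (hS0 : ∀ h ∈ S, ∀ m, h m ≠ 0)
    (α : ℝ)
    (hα : IsLeast {b : ℝ | ∃ hu ∈ S, ∃ hv ∈ S, hu ≠ hv ∧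
      b = Finset.univ.sup' (Finset.univ_nonempty_iff.mpr ⟨⟨0, hM⟩⟩)
        (fun m : Fin M => circDist (Complex.arg (hu m)) (Complex.arg (hv m)))} α)
    (hα0 : 0 < α)
    (x : Fin N → ℂ) (hx : IsUniformPhasePilot N x)
    (hNα : Real.pi / (2 * α) ≤ (N : ℝ))
    (hoff : ∀ h ∈ S, ∀ (m : Fin M) (k : Fin N), offAxis (h m * x k)) :
    Set.InjOn (fun h : Fin M → ℂ => fun mk : Fin M × Fin N => q (h mk.1 * x mk.2))
      (S : Set (Fin M → ℂ)) := by
  have hπ : (0:ℝ) < π := Real.pi_pos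
  have hN' : (0:ℝ) < (N:ℝ) := by exact_mod_cast hN
  intro hu huS hv hvS heq
  by_contra hne
  have huS' : hu ∈ S := huS
  have hvS' : hv ∈ S := hvS
  -- α ≤ sup'
  have hmem : Finset.univ.sup' (Finset.univ_nonempty_iff.mpr ⟨⟨0, hM⟩⟩)
        (fun m : Fin M => circDist (Complex.arg (hu m)) (Complex.arg (hv m))) ∈
      {b : ℝ | ∃ hu ∈ S, ∃ hv ∈ S, hu ≠ hv ∧
      b = Finset.univ.sup' (Finset.univ_nonempty_iff.mpr ⟨⟨0, hM⟩⟩)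
        (fun m : Fin M => circDist (Complex.arg (hu m)) (Complex.arg (hv m)))} :=
    ⟨hu, huS', hv, hvS', hne, rfl⟩
  have hsup := hα.2 hmem
  obtain ⟨m0, _, hm0⟩ := Finset.exists_mem_eq_sup' (Finset.univ_nonempty_iff.mpr ⟨⟨0, hM⟩⟩)
    (fun m : Fin M => circDist (Complex.arg (hu m)) (Complex.arg (hv m)))
  rw [hm0] at hsup
  set a : ℝ := Complex.arg (hu m0) with ha
  set b : ℝ := Complex.arg (hv m0) with hb
  obtain ⟨r, hrpos, hxk⟩ := hx
  -- build the hypothesis of main_real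
  have H : ∀ k : ℤ, 1 ≤ k → k ≤ N →
      Real.cos (a + k * (π / (2 * N))) ≠ 0 ∧ Real.sin (a + k * (π / (2 * N))) ≠ 0 ∧
      Real.cos (b + k * (π / (2 * N))) ≠ 0 ∧ Real.sin (b + k * (π / (2 * N))) ≠ 0 ∧
      (0 < Real.cos (a + k * (π / (2 * N))) ↔ 0 < Real.cos (b + k * (π / (2 * N)))) ∧
      (0 < Real.sin (a + k * (π / (2 * N))) ↔ 0 < Real.sin (b + k * (π / (2 * N)))) := by
    intro k hk1 hk2
    have hkN : (k - 1).toNat < N := by omega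
    set k0 : Fin N := ⟨(k - 1).toNat, hkN⟩ with hk0
    have hcast : (((k0 : ℕ) : ℝ) + 1) = (k : ℝ) := by
      have : ((k0 : ℕ) : ℤ) = k - 1 := by simp [hk0]; omega
      have := congrArg (Int.cast : ℤ → ℝ) this
      push_cast at this; linarith
    set θ : ℝ := (((k0 : ℕ) : ℝ) + 1) * π / (2 * N) with hθ
    have hθeq : ∀ c : ℝ, c + (k : ℝ) * (π / (2 * N)) = c + θ := by
      intro c; rw [hθ, hcast]; ring
    have hAu : 0 < ‖hu m0‖ * r k0 :=
      mul_pos (norm_pos_iff.mpr (hS0 hu huS' m0)) (hrpos k0)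
    have hAv : 0 < ‖hv m0‖ * r k0 :=
      mul_pos (norm_pos_iff.mpr (hS0 hv hvS' m0)) (hrpos k0)
    have hdu : hu m0 * x k0 = ((‖hu m0‖ * r k0 : ℝ) : ℂ) *
        Complex.exp (((a + θ : ℝ)) * Complex.I) := by
      rw [hxk k0]; exact prod_decomp _ (hS0 hu huS' m0) _ _
    have hdv : hv m0 * x k0 = ((‖hv m0‖ * r k0 : ℝ) : ℂ) *
        Complex.exp (((b + θ : ℝ)) * Complex.I) := by
      rw [hxk k0]; exact prod_decomp _ (hS0 hv hvS' m0) _ _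
    have hure : (hu m0 * x k0).re = (‖hu m0‖ * r k0) * Real.cos (a + θ) := by
      rw [hdu, Complex.re_ofReal_mul, Complex.exp_ofReal_mul_I_re]
    have huim : (hu m0 * x k0).im = (‖hu m0‖ * r k0) * Real.sin (a + θ) := by
      rw [hdu, Complex.im_ofReal_mul, Complex.exp_ofReal_mul_I_im]
    have hvre : (hv m0 * x k0).re = (‖hv m0‖ * r k0) * Real.cos (b + θ) := by
      rw [hdv, Complex.re_ofReal_mul, Complex.exp_ofReal_mul_I_re]
    have hvim : (hv m0 * x k0).im = (‖hv m0‖ * r k0) * Real.sin (b + θ) := by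
      rw [hdv, Complex.im_ofReal_mul, Complex.exp_ofReal_mul_I_im]
    obtain ⟨hure0, huim0⟩ := hoff hu huS' m0 k0
    obtain ⟨hvre0, hvim0⟩ := hoff hv hvS' m0 k0
    have hqeq : q (hu m0 * x k0) = q (hv m0 * x k0) := congrFun heq (m0, k0)
    have hsre : Real.sign (hu m0 * x k0).re = Real.sign (hv m0 * x k0).re :=
      congrArg Prod.fst hqeq
    have hsim : Real.sign (hu m0 * x k0).im = Real.sign (hv m0 * x k0).im :=
      congrArg Prod.snd hqeq
    have hiffre := sign_iff _ _ hure0 hvre0 hsre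
    have hiffim := sign_iff _ _ huim0 hvim0 hsim
    rw [hure, hvre] at hiffre
    rw [huim, hvim] at hiffim
    rw [hure] at hure0
    rw [hvre] at hvre0
    rw [huim] at huim0
    rw [hvim] at hvim0
    rw [hθeq a, hθeq b]
    have hcu : Real.cos (a + θ) ≠ 0 := fun h0 => hure0 (by rw [h0, mul_zero])
    have hsu : Real.sin (a + θ) ≠ 0 := fun h0 => huim0 (by rw [h0, mul_zero])
    have hcv : Real.cos (b + θ) ≠ 0 := fun h0 => hvre0 (by rw [h0, mul_zero])
    have hsv : Real.sin (b + θ) ≠ 0 := fun h0 => hvim0 (by rw [h0, mul_zero])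
    refine ⟨hcu, hsu, hcv, hsv, ?_, ?_⟩
    · constructor
      · intro h0
        have := hiffre.mp (mul_pos hAu h0)
        nlinarith
      · intro h0
        have := hiffre.mpr (mul_pos hAv h0)
        nlinarith
    · constructor
      · intro h0
        have := hiffim.mp (mul_pos hAu h0)
        nlinarith
      · intro h0
        have := hiffim.mpr (mul_pos hAv h0)
        nlinarith
  obtain ⟨j, hj⟩ := main_real N hN a b H
  have hδα : π / (2 * N) ≤ α := by
    rw [div_le_iff₀ (by positivity)] at hNα ⊢
    nlinarith
  have hlow : circDist a b ≤ |a - b - 2 * π * j| := by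
    apply ciInf_le ⟨0, fun y hy => ?_⟩ j
    obtain ⟨j', rfl⟩ := hy
    positivity
  have : circDist a b < α := lt_of_le_of_lt hlow (lt_of_lt_of_le hj hδα)
  linarith
end
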